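/- The Lie-Yamaguti algebra structure 𝓛₁₅ on ℂ⁴, given by [e₁,e₂]=e₄, [e₁,e₃]=e₄, [e₂,e₃,e₁]=e₄, [e₃,e₁,e₂]=e₄, [e₂,e₃,e₂]=e₄, [e₂,e₁,e₃]=2e₄, degenerates to the structure 𝓛₁₀ with zero binary product and trilinear products [e₂,e₃,e₁]=e₄, [e₃,e₁,e₂]=e₄, [e₂,e₃,e₂]=e₄, [e₂,e₁,e₃]=2e₄. -/

import Mathlib

open Filter Matrix Topology

/-- ℂ⁴ -/
abbrev V4 : Type := Fin 4 → ℂ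

/-- GL₄(ℂ) -/
abbrev GL4 := Matrix.GeneralLinearGroup (Fin 4) ℂ

/-- structure constants of a bilinear map on ℂ⁴: `μ i j` is the value on `(eᵢ, eⱼ)`. -/
abbrev Bil4 := Fin 4 → Fin 4 → V4

/-- structure constants of a trilinear map on ℂ⁴. -/
abbrev Tril4 := Fin 4 → Fin 4 → Fin 4 → V4

/-- standard basis vectors -/
noncomputable def e4 (k : Fin 4) : V4 := Pi.single k (1 : ℂ)

/-- action of `g ∈ GL₄(ℂ)` on a bilinear map: `(g·μ)(x,y) = g μ(g⁻¹x, g⁻¹y)`,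
in structure constants. -/
noncomputable def actBil (g : GL4) (μ : Bil4) : Bil4 := fun i j =>
  (g : Matrix (Fin 4) (Fin 4) ℂ).mulVec
    (∑ p, ∑ q,
      (((g⁻¹ : GL4) : Matrix (Fin 4) (Fin 4) ℂ) p i *
       ((g⁻¹ : GL4) : Matrix (Fin 4) (Fin 4) ℂ) q j) • μ p q)

/-- action of `g ∈ GL₄(ℂ)` on a trilinear map:
`(g·τ)(x,y,z) = g τ(g⁻¹x, g⁻¹y, g⁻¹z)`, in structure constants. -/
noncomputable def actTril (g : GL4) (τ : Tril4) : Tril4 := fun i j k =>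
  (g : Matrix (Fin 4) (Fin 4) ℂ).mulVec
    (∑ p, ∑ q, ∑ r,
      (((g⁻¹ : GL4) : Matrix (Fin 4) (Fin 4) ℂ) p i *
       ((g⁻¹ : GL4) : Matrix (Fin 4) (Fin 4) ℂ) q j *
       ((g⁻¹ : GL4) : Matrix (Fin 4) (Fin 4) ℂ) r k) • τ p q r)

/-- `(μ,τ)` degenerates to `(lam,sig)`: there is a curve `g : ℂ∖{0} → GL₄(ℂ)` with
`g(t)·μ → lam` and `g(t)·τ → sig` as `t → 0`. -/
def Degenerates (μ : Bil4) (τ : Tril4) (lam : Bil4) (sig : Tril4) : Prop :=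
  ∃ g : ℂ → GL4,
    Tendsto (fun t => actBil (g t) μ) (𝓝[≠] (0 : ℂ)) (𝓝 lam) ∧
    Tendsto (fun t => actTril (g t) τ) (𝓝[≠] (0 : ℂ)) (𝓝 sig)

noncomputable def μL15 : Bil4 := fun i j =>
  if i = (0 : Fin 4) ∧ j = (1 : Fin 4) then e4 3
  else if i = (1 : Fin 4) ∧ j = (0 : Fin 4) then -(e4 3)
  else if i = (0 : Fin 4) ∧ j = (2 : Fin 4) then e4 3
  else if i = (2 : Fin 4) ∧ j = (0 : Fin 4) then -(e4 3)
  else 0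

noncomputable def τL15 : Tril4 := fun i j k =>
  if i = (1 : Fin 4) ∧ j = (2 : Fin 4) ∧ k = (0 : Fin 4) then e4 3
  else if i = (2 : Fin 4) ∧ j = (1 : Fin 4) ∧ k = (0 : Fin 4) then -(e4 3)
  else if i = (2 : Fin 4) ∧ j = (0 : Fin 4) ∧ k = (1 : Fin 4) then e4 3
  else if i = (0 : Fin 4) ∧ j = (2 : Fin 4) ∧ k = (1 : Fin 4) then -(e4 3)
  else if i = (1 : Fin 4) ∧ j = (2 : Fin 4) ∧ k = (1 : Fin 4) then e4 3
  else if i = (2 : Fin 4) ∧ j = (1 : Fin 4) ∧ k = (1 : Fin 4) then -(e4 3)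
  else if i = (1 : Fin 4) ∧ j = (0 : Fin 4) ∧ k = (2 : Fin 4) then (2 : ℂ) • e4 3
  else if i = (0 : Fin 4) ∧ j = (1 : Fin 4) ∧ k = (2 : Fin 4) then -((2 : ℂ) • e4 3)
  else 0

noncomputable def zeroBil : Bil4 := fun _ _ => 0

noncomputable def τL10 : Tril4 := fun i j k =>
  if i = (1 : Fin 4) ∧ j = (2 : Fin 4) ∧ k = (0 : Fin 4) then e4 3
  else if i = (2 : Fin 4) ∧ j = (1 : Fin 4) ∧ k = (0 : Fin 4) then -(e4 3)
  else if i = (2 : Fin 4) ∧ j = (0 : Fin 4) ∧ k = (1 : Fin 4) then e4 3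
  else if i = (0 : Fin 4) ∧ j = (2 : Fin 4) ∧ k = (1 : Fin 4) then -(e4 3)
  else if i = (1 : Fin 4) ∧ j = (2 : Fin 4) ∧ k = (1 : Fin 4) then e4 3
  else if i = (2 : Fin 4) ∧ j = (1 : Fin 4) ∧ k = (1 : Fin 4) then -(e4 3)
  else if i = (1 : Fin 4) ∧ j = (0 : Fin 4) ∧ k = (2 : Fin 4) then (2 : ℂ) • e4 3
  else if i = (0 : Fin 4) ∧ j = (1 : Fin 4) ∧ k = (2 : Fin 4) then -((2 : ℂ) • e4 3)
  else 0


noncomputable def dvec (t : ℂ) : Fin 4 → ℂ := fun i => if i = 3 then t^3 else t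

noncomputable def gcurve (t : ℂ) : GL4 :=
  if h : t = 0 then 1 else
  ⟨Matrix.diagonal (dvec t),
   Matrix.diagonal (fun i => (dvec t i)⁻¹),
   by
     rw [Matrix.diagonal_mul_diagonal]
     have : (fun i => dvec t i * (dvec t i)⁻¹) = fun _ => (1:ℂ) := by
       funext i
       have hnz : dvec t i ≠ 0 := by
         simp only [dvec]; split <;> simp [h]
       field_simp
     rw [this, Matrix.diagonal_one],
   by
     rw [Matrix.diagonal_mul_diagonal]
     have : (fun i => (dvec t i)⁻¹ * dvec t i) = fun _ => (1:ℂ) := by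
       funext i
       have hnz : dvec t i ≠ 0 := by
         simp only [dvec]; split <;> simp [h]
       field_simp
     rw [this, Matrix.diagonal_one]⟩

lemma gcurve_val {t : ℂ} (h : t ≠ 0) :
    ((gcurve t : GL4) : Matrix (Fin 4) (Fin 4) ℂ) = Matrix.diagonal (dvec t) := by
  simp [gcurve, h]

lemma gcurve_inv_val {t : ℂ} (h : t ≠ 0) :
    (((gcurve t)⁻¹ : GL4) : Matrix (Fin 4) (Fin 4) ℂ) =
      Matrix.diagonal (fun i => (dvec t i)⁻¹) := by
  simp [gcurve, h, Units.inv_mk]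

lemma sum3_diag (f : Fin 4 → ℂ) (τ : Tril4) (i j k : Fin 4) :
    (∑ p, ∑ q, ∑ r,
      ((Matrix.diagonal f) p i * (Matrix.diagonal f) q j * (Matrix.diagonal f) r k) • τ p q r)
      = (f i * f j * f k) • τ i j k := by
  simp [Matrix.diagonal_apply, ite_mul, mul_ite, zero_mul, mul_zero, ite_smul, zero_smul,
    Finset.sum_ite_eq, Finset.sum_ite_eq']

lemma sum2_diag (f : Fin 4 → ℂ) (μ : Bil4) (i j : Fin 4) :
    (∑ p, ∑ q, ((Matrix.diagonal f) p i * (Matrix.diagonal f) q j) • μ p q)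
      = (f i * f j) • μ i j := by
  simp [Matrix.diagonal_apply, ite_mul, mul_ite, zero_mul, mul_zero, ite_smul, zero_smul,
    Finset.sum_ite_eq, Finset.sum_ite_eq']

lemma mulVec_diag_e43 (t : ℂ) :
    (Matrix.diagonal (dvec t)).mulVec (e4 3) = t ^ 3 • e4 3 := by
  funext l
  rw [Matrix.mulVec_diagonal]
  simp only [e4, Pi.single_apply, Pi.smul_apply, smul_eq_mul, dvec]
  fin_cases l <;> simp

lemma μL15_e43 (i j : Fin 4) : ∃ c : ℂ, μL15 i j = c • e4 3 := by
  unfold μL15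
  split
  · exact ⟨1, (one_smul _ _).symm⟩
  split
  · exact ⟨-1, by simp⟩
  split
  · exact ⟨1, (one_smul _ _).symm⟩
  split
  · exact ⟨-1, by simp⟩
  exact ⟨0, by simp⟩

lemma τL15_e43 (i j k : Fin 4) : ∃ c : ℂ, τL15 i j k = c • e4 3 := by
  unfold τL15
  split
  · exact ⟨1, (one_smul _ _).symm⟩
  split
  · exact ⟨-1, by simp⟩
  split
  · exact ⟨1, (one_smul _ _).symm⟩
  split
  · exact ⟨-1, by simp⟩
  split
  · exact ⟨1, (one_smul _ _).symm⟩
  split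
  · exact ⟨-1, by simp⟩
  split
  · exact ⟨2, rfl⟩
  split
  · exact ⟨-2, by simp⟩
  exact ⟨0, by simp⟩

lemma μL15_three (i j : Fin 4) (h : i = 3 ∨ j = 3) : μL15 i j = 0 := by
  unfold μL15
  rcases h with h | h <;> subst h <;>
    simp

lemma τL15_three (i j k : Fin 4) (h : i = 3 ∨ j = 3 ∨ k = 3) : τL15 i j k = 0 := by
  unfold τL15
  rcases h with h | h | h <;> subst h <;>
    simp

lemma actBil_gcurve {t : ℂ} (h : t ≠ 0) :
    actBil (gcurve t) μL15 = fun i j => t • μL15 i j := by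
  funext i j
  simp only [actBil, gcurve_val h, gcurve_inv_val h, sum2_diag, Matrix.mulVec_smul]
  obtain ⟨c, hc⟩ := μL15_e43 i j
  by_cases hi : i = 3
  · rw [μL15_three i j (Or.inl hi)]; simp
  by_cases hj : j = 3
  · rw [μL15_three i j (Or.inr hj)]; simp
  rw [hc]
  simp only [Matrix.mulVec_smul, mulVec_diag_e43, smul_smul]
  have hdi : dvec t i = t := by simp [dvec, hi]
  have hdj : dvec t j = t := by simp [dvec, hj]
  rw [hdi, hdj]
  congr 1
  field_simp
  try ring
  try tauto

lemma actTril_gcurve {t : ℂ} (h : t ≠ 0) :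
    actTril (gcurve t) τL15 = τL15 := by
  funext i j k
  simp only [actTril, gcurve_val h, gcurve_inv_val h, sum3_diag]
  obtain ⟨c, hc⟩ := τL15_e43 i j k
  by_cases hi : i = 3
  · rw [τL15_three i j k (Or.inl hi)]; simp
  by_cases hj : j = 3
  · rw [τL15_three i j k (Or.inr (Or.inl hj))]; simp
  by_cases hk : k = 3
  · rw [τL15_three i j k (Or.inr (Or.inr hk))]; simp
  rw [hc]
  simp only [Matrix.mulVec_smul, mulVec_diag_e43, smul_smul]
  have hdi : dvec t i = t := by simp [dvec, hi]
  have hdj : dvec t j = t := by simp [dvec, hj]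
  have hdk : dvec t k = t := by simp [dvec, hk]
  rw [hdi, hdj, hdk]
  congr 1
  field_simp
  try ring
  try tauto

/-- 𝓛₁₅ degenerates to 𝓛₁₀. -/
theorem stmt2 : Degenerates μL15 τL15 zeroBil τL10 := by
  refine ⟨gcurve, ?_, ?_⟩
  · apply Tendsto.congr' (f₁ := fun t => fun i j => t • μL15 i j)
    · filter_upwards [self_mem_nhdsWithin] with t ht
      exact (actBil_gcurve ht).symm
    · have : Tendsto (fun t : ℂ => fun i j => t • μL15 i j) (𝓝 0)
          (𝓝 (fun i j => (0:ℂ) • μL15 i j)) := by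
        apply tendsto_pi_nhds.2; intro i
        apply tendsto_pi_nhds.2; intro j
        exact (tendsto_id.smul_const (μL15 i j))
      rw [show zeroBil = fun i j => 0 from rfl]
      simpa [zeroBil] using this.mono_left nhdsWithin_le_nhds
  · apply Tendsto.congr' (f₁ := fun _ => τL15)
    · filter_upwards [self_mem_nhdsWithin] with t ht
      exact (actTril_gcurve ht).symm
    · have : τL15 = τL10 := rfl
      rw [this]; exact tendsto_const_nhds
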